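/- Let T : H → H be α-averaged for α ∈ (0,1), with fix T ≠ ∅. Given z₀ ∈ H, errors dₖ with ∑ₖ ρₖ‖dₖ‖ < ∞, and relaxations ρₖ ∈ (0, 1/α) with ∑ₖ ρₖ(1/α − ρₖ) = +∞, the sequence zₖ₊₁ = zₖ + ρₖ(Tzₖ − zₖ + dₖ) converges weakly to a fixed point of T. -/

import Mathlib

open RealInnerProductSpace

namespace KMaux
open Filter

/-- quasi-monotone sequences with summable errors converge -/
lemma km_aux_tendsto (a e : ℕ → ℝ) (he0 : ∀ k, 0 ≤ e k) (hes : Summable e)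
    (ha0 : ∀ k, 0 ≤ a k) (hstep : ∀ k, a (k + 1) ≤ a k + e k) :
    ∃ l, 0 ≤ l ∧ Tendsto a atTop (nhds l) ∧ ∀ k, a k ≤ a 0 + ∑' j, e j := by
  set tail : ℕ → ℝ := fun n => ∑' j, e (j + n) with htail
  have hts : ∀ n, Summable fun j => e (j + n) := fun n => (summable_nat_add_iff n).2 hes
  have htail0 : ∀ n, 0 ≤ tail n := fun n => tsum_nonneg fun j => he0 _
  have htrec : ∀ n, tail n = e n + tail (n + 1) := by
    intro n
    have h := Summable.tsum_eq_zero_add (hts n)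
    simp only [zero_add] at h
    have h2 : (∑' j, e (j + 1 + n)) = tail (n + 1) :=
      tsum_congr fun j => by rw [show j + 1 + n = j + (n + 1) from by omega]
    rw [htail]; dsimp only; rw [h, h2]
  set c : ℕ → ℝ := fun n => a n + tail n with hc
  have hanti : Antitone c := by
    apply antitone_nat_of_succ_le
    intro n
    have := hstep n
    have h2 := htrec n
    simp only [hc]
    nlinarith [htail0 (n+1)]
  have hbdd : ∀ n, -1 ≤ c n := fun n => by
    simp only [hc]; nlinarith [ha0 n, htail0 n]
  have hconv : ∃ l, Tendsto c atTop (nhds l) := by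
    refine ⟨⨅ n, c n, tendsto_atTop_ciInf hanti ⟨-1, ?_⟩⟩
    rintro x ⟨n, rfl⟩; exact hbdd n
  obtain ⟨l, hl⟩ := hconv
  have htail_to : Tendsto tail atTop (nhds 0) := tendsto_sum_nat_add e
  have hta : Tendsto a atTop (nhds (l - 0)) := by
    have := hl.sub htail_to
    simpa [hc] using this
  refine ⟨l - 0, ?_, hta, ?_⟩
  · exact ge_of_tendsto' hta fun n => ha0 n
  · intro k
    have h1 : c k ≤ c 0 := hanti (Nat.zero_le k)
    have h2 : tail 0 = ∑' j, e j := by simp [htail]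
    simp only [hc] at h1
    nlinarith [htail0 k, htail0 0, h1, h2.le, h2.ge]

lemma km_aux_ultra (V : Ultrafilter ℕ) (t : ℕ → ℝ) (B : ℝ) (hB : ∀ k, |t k| ≤ B) :
    ∃ c, Tendsto t ↑V (nhds c) := by
  have h1 : ∀ k, t k ∈ Set.Icc (-B) B := fun k => by
    have := abs_le.1 (hB k); exact ⟨this.1, this.2⟩
  have h2 : ↑(V.map t) ≤ Filter.principal (Set.Icc (-B) B) := by
    rw [le_principal_iff]
    exact Filter.mem_map.2 (Filter.univ_mem' h1)
  obtain ⟨c, -, hc⟩ := (isCompact_Icc (a := -B) (b := B)).ultrafilter_le_nhds (V.map t) h2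
  exact ⟨c, by rwa [Ultrafilter.coe_map] at hc⟩

lemma km_aux_weaklimit {H : Type*} [NormedAddCommGroup H] [InnerProductSpace ℝ H]
    [CompleteSpace H] (R : H → H) (hR : ∀ x y, ‖R x - R y‖ ≤ ‖x - y‖)
    (z : ℕ → H) (M : ℝ) (hM : ∀ k, ‖z k‖ ≤ M)
    (hb : Tendsto (fun k => ‖R (z k) - z k‖) atTop (nhds 0))
    (V : Ultrafilter ℕ) (hV : ↑V ≤ (atTop : Filter ℕ)) :
    ∃ x : H, R x = x ∧ ∀ y : H, Tendsto (fun k => ⟪z k, y⟫) ↑V (nhds ⟪x, y⟫) := by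
  have hM0 : 0 ≤ M := le_trans (norm_nonneg (z 0)) (hM 0)
  -- limits of inner products along V
  have hex : ∀ y : H, ∃ c, Tendsto (fun k => ⟪z k, y⟫) ↑V (nhds c) := by
    intro y
    refine km_aux_ultra V _ (M * ‖y‖) fun k => ?_
    calc |⟪z k, y⟫| ≤ ‖z k‖ * ‖y‖ := abs_real_inner_le_norm _ _
      _ ≤ M * ‖y‖ := mul_le_mul_of_nonneg_right (hM k) (norm_nonneg y)
  choose g hg using hex
  -- linearity and boundedness of g
  have hadd : ∀ y y', g (y + y') = g y + g y' := by
    intro y y'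
    refine tendsto_nhds_unique (f := fun k => ⟪z k, y + y'⟫) (l := (V : Filter ℕ)) ?_ ?_
    · exact hg (y + y')
    · simpa only [inner_add_right] using (hg y).add (hg y')
  have hsmul : ∀ (c : ℝ) y, g (c • y) = c * g y := by
    intro c y
    refine tendsto_nhds_unique (f := fun k => ⟪z k, c • y⟫) (l := (V : Filter ℕ)) ?_ ?_
    · exact hg (c • y)
    · simpa only [real_inner_smul_right] using (hg y).const_mul c
  obtain ⟨x, hx⟩ : ∃ x : H, ∀ y, ⟪x, y⟫ = g y := by
    have hbound : ∀ y, ‖(({ toFun := g, map_add' := hadd, map_smul' := hsmul } :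
        H →ₗ[ℝ] ℝ)) y‖ ≤ M * ‖y‖ := by
      intro y
      rw [Real.norm_eq_abs]
      refine le_of_tendsto' (hg y).abs fun k => ?_
      calc |⟪z k, y⟫| ≤ ‖z k‖ * ‖y‖ := abs_real_inner_le_norm _ _
        _ ≤ M * ‖y‖ := mul_le_mul_of_nonneg_right (hM k) (norm_nonneg y)
    set F' : H →L[ℝ] ℝ := LinearMap.mkContinuous _ M hbound with hF'
    refine ⟨(InnerProductSpace.toDual ℝ H).symm F', fun y => ?_⟩
    have h1 : InnerProductSpace.toDual ℝ H ((InnerProductSpace.toDual ℝ H).symm F') = F' :=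
      (InnerProductSpace.toDual ℝ H).apply_symm_apply F'
    have h2 : InnerProductSpace.toDual ℝ H ((InnerProductSpace.toDual ℝ H).symm F') y
        = ⟪(InnerProductSpace.toDual ℝ H).symm F', y⟫ := InnerProductSpace.toDual_apply_apply
    rw [← h2, h1]; rfl
  have hgy : ∀ y, Tendsto (fun k => ⟪z k, y⟫) ↑V (nhds ⟪x, y⟫) := fun y => (hx y) ▸ hg y
  -- limit of ‖z k‖²
  obtain ⟨S, hS⟩ := km_aux_ultra V (fun k => ‖z k‖ ^ 2) (M ^ 2) (fun k => by
    rw [abs_of_nonneg (sq_nonneg _)]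
    exact pow_le_pow_left₀ (norm_nonneg _) (hM k) 2)
  have hVne : (V : Filter ℕ).NeBot := V.neBot
  set h : H → ℝ := fun u => S - 2 * ⟪x, u⟫ + ‖u‖ ^ 2 with hh
  have hnu : ∀ u : H, Tendsto (fun k => ‖z k - u‖ ^ 2) ↑V (nhds (h u)) := by
    intro u
    have : ∀ k, ‖z k - u‖ ^ 2 = ‖z k‖ ^ 2 - 2 * ⟪z k, u⟫ + ‖u‖ ^ 2 := fun k =>
      norm_sub_sq_real _ _
    simp only [this, hh]
    exact ((hS.sub ((hgy u).const_mul 2)).add tendsto_const_nhds)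
  have hhx0 : 0 ≤ h x := ge_of_tendsto' (hnu x) fun k => sq_nonneg _
  have hnx : Tendsto (fun k => ‖z k - x‖) ↑V (nhds (Real.sqrt (h x))) := by
    have := (Real.continuous_sqrt.tendsto (h x)).comp (hnu x)
    simp only [Function.comp_def] at this
    convert this using 2 with k
    rw [Real.sqrt_sq (norm_nonneg _)]
  have hbV : Tendsto (fun k => ‖R (z k) - z k‖) ↑V (nhds 0) := hb.mono_left hV
  have hineq : ∀ k, ‖z k - R x‖ ^ 2 ≤ (‖R (z k) - z k‖ + ‖z k - x‖) ^ 2 := by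
    intro k
    have h1 : ‖z k - R x‖ ≤ ‖R (z k) - z k‖ + ‖z k - x‖ := by
      calc ‖z k - R x‖ ≤ ‖z k - R (z k)‖ + ‖R (z k) - R x‖ := norm_sub_le_norm_sub_add_norm_sub _ _ _
        _ ≤ ‖R (z k) - z k‖ + ‖z k - x‖ := by
            rw [norm_sub_rev]
            exact add_le_add le_rfl (hR _ _)
    exact pow_le_pow_left₀ (norm_nonneg _) h1 2
  have hrhs : Tendsto (fun k => (‖R (z k) - z k‖ + ‖z k - x‖) ^ 2) ↑V (nhds (h x)) := by
    have := (hbV.add hnx).pow 2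
    simpa [Real.sq_sqrt hhx0] using this
  have hle : h (R x) ≤ h x := le_of_tendsto_of_tendsto' (hnu (R x)) hrhs hineq
  have hRx : R x = x := by
    have e1 : ‖R x - x‖ ^ 2 = ‖R x‖ ^ 2 - 2 * ⟪R x, x⟫ + ‖x‖ ^ 2 := norm_sub_sq_real _ _
    have e2 : ⟪x, R x⟫ = ⟪R x, x⟫ := real_inner_comm _ _
    have e3 : ⟪x, x⟫ = ‖x‖ ^ 2 := real_inner_self_eq_norm_sq _
    have hle' : S - 2 * ⟪x, R x⟫ + ‖R x‖ ^ 2 ≤ S - 2 * ⟪x, x⟫ + ‖x‖ ^ 2 := by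
      simpa only [hh] using hle
    have : ‖R x - x‖ ^ 2 ≤ 0 := by nlinarith [hle', e1, e2, e3]
    have h0 : ‖R x - x‖ = 0 := by nlinarith [norm_nonneg (R x - x), sq_nonneg ‖R x - x‖]
    rw [← sub_eq_zero]; exact norm_eq_zero.1 h0
  exact ⟨x, hRx, hgy⟩
/-- convexity identity for norms in inner product spaces -/
lemma km_aux_convex {H : Type*} [NormedAddCommGroup H] [InnerProductSpace ℝ H]
    (u v : H) (l : ℝ) :
    ‖(1 - l) • u + l • v‖ ^ 2 =
      (1 - l) * ‖u‖ ^ 2 + l * ‖v‖ ^ 2 - l * (1 - l) * ‖u - v‖ ^ 2 := by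
  have e : ∀ w : H, ‖w‖ ^ 2 = ⟪w, w⟫ := fun w => (real_inner_self_eq_norm_sq w).symm
  rw [e, e, e, e]
  simp only [inner_add_left, inner_add_right, inner_sub_left, inner_sub_right,
    real_inner_smul_left, real_inner_smul_right, real_inner_comm v u]
  ring

end KMaux

set_option maxHeartbeats 1000000 in
open Filter KMaux in
theorem krasnoselskii_mann_weak_convergence
    {H : Type*} [NormedAddCommGroup H] [InnerProductSpace ℝ H] [CompleteSpace H]
    (T : H → H) (α : ℝ) (hα0 : 0 < α) (hα1 : α < 1)
    (havg : ∃ R : H → H, (∀ x y, ‖R x - R y‖ ≤ ‖x - y‖) ∧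
      ∀ x, T x = (1 - α) • x + α • R x)
    (hfix : ∃ p, T p = p)
    (ρ : ℕ → ℝ) (hρ : ∀ k, 0 < ρ k ∧ ρ k < 1 / α)
    (d : ℕ → H)
    (herr : Summable fun k => ρ k * ‖d k‖)
    (hdiv : ¬ Summable fun k => ρ k * (1 / α - ρ k))
    (z : ℕ → H)
    (hrec : ∀ k, z (k + 1) = z k + ρ k • (T (z k) - z k + d k)) :
    ∃ p : H, T p = p ∧
      ∀ y : H, Filter.Tendsto (fun k => ⟪z k, y⟫) Filter.atTop (nhds ⟪p, y⟫) := by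
  obtain ⟨R, hR, hTR⟩ := havg
  have hαne : α ≠ 0 := ne_of_gt hα0
  -- fixed points of T and R coincide
  have hfixTR : ∀ p : H, T p = p ↔ R p = p := by
    intro p
    constructor
    · intro hp
      have h1 : α • (R p - p) = 0 := by
        have := hTR p
        rw [hp] at this
        have h2 : (0 : H) = α • (R p - p) := by
          calc (0:H) = p - p := (sub_self p).symm
            _ = ((1 - α) • p + α • R p) - p := by rw [← this]
            _ = α • (R p - p) := by module
        exact h2.symm
      have := smul_eq_zero.1 h1
      rcases this with h | h
      · exact absurd h hαne
      · rw [← sub_eq_zero]; exact h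
    · intro hp
      rw [hTR, hp]; module
  obtain ⟨q₀, hq₀T⟩ := hfix
  have hq₀ : R q₀ = q₀ := (hfixTR q₀).1 hq₀T
  -- reformulate the recursion
  set lam : ℕ → ℝ := fun k => α * ρ k with hlam
  set w : ℕ → H := fun k => z k + lam k • (R (z k) - z k) with hw
  have hTz : ∀ k, T (z k) - z k = α • (R (z k) - z k) := by
    intro k; rw [hTR]; module
  have hzw : ∀ k, z (k + 1) = w k + ρ k • d k := by
    intro k
    rw [hrec k, hTz k, hw]
    simp only [hlam]
    module
  have hlam0 : ∀ k, 0 < lam k := fun k => mul_pos hα0 (hρ k).1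
  have hlam1 : ∀ k, lam k < 1 := by
    intro k
    have h1 : α * ρ k < α * (1 / α) := mul_lt_mul_of_pos_left (hρ k).2 hα0
    rwa [mul_one_div_cancel hαne] at h1
  set e : ℕ → ℝ := fun k => ρ k * ‖d k‖ with he
  have he0 : ∀ k, 0 ≤ e k := fun k => mul_nonneg (le_of_lt (hρ k).1) (norm_nonneg _)
  have hnd : ∀ k, ‖ρ k • d k‖ = e k := by
    intro k
    rw [norm_smul, Real.norm_eq_abs, abs_of_pos (hρ k).1]
  -- basic Fejér step
  have hwq : ∀ q, R q = q → ∀ k, ‖w k - q‖ ≤ ‖z k - q‖ := by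
    intro q hq k
    have hid : w k - q = (1 - lam k) • (z k - q) + lam k • (R (z k) - q) := by
      rw [hw]; module
    rw [hid]
    have h1 : ‖R (z k) - q‖ ≤ ‖z k - q‖ := by
      conv_lhs => rw [← hq]
      exact hR _ _
    calc ‖(1 - lam k) • (z k - q) + lam k • (R (z k) - q)‖
        ≤ ‖(1 - lam k) • (z k - q)‖ + ‖lam k • (R (z k) - q)‖ := norm_add_le _ _
      _ = (1 - lam k) * ‖z k - q‖ + lam k * ‖R (z k) - q‖ := by
          rw [norm_smul, norm_smul, Real.norm_eq_abs, Real.norm_eq_abs,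
            abs_of_nonneg (by linarith [hlam1 k]), abs_of_nonneg (le_of_lt (hlam0 k))]
      _ ≤ (1 - lam k) * ‖z k - q‖ + lam k * ‖z k - q‖ := by
          have := hlam0 k
          nlinarith
      _ = ‖z k - q‖ := by ring
  have hstep : ∀ q, R q = q → ∀ k, ‖z (k + 1) - q‖ ≤ ‖z k - q‖ + e k := by
    intro q hq k
    calc ‖z (k + 1) - q‖ = ‖(w k - q) + ρ k • d k‖ := by rw [hzw k]; congr 1; module
      _ ≤ ‖w k - q‖ + ‖ρ k • d k‖ := norm_add_le _ _
      _ ≤ ‖z k - q‖ + e k := add_le_add (hwq q hq k) (le_of_eq (hnd k))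
  -- convergence of distances to fixed points
  have hfej : ∀ q, R q = q → ∃ L, 0 ≤ L ∧
      Tendsto (fun k => ‖z k - q‖) atTop (nhds L) ∧
      ∀ k, ‖z k - q‖ ≤ ‖z 0 - q‖ + ∑' j, e j := fun q hq =>
    km_aux_tendsto _ e he0 herr (fun k => norm_nonneg _) (hstep q hq)
  obtain ⟨L₀, hL₀0, hL₀, hbound₀⟩ := hfej q₀ hq₀
  set E : ℝ := ∑' j, e j with hE
  have hE0 : 0 ≤ E := tsum_nonneg he0
  set A : ℝ := ‖z 0 - q₀‖ + E with hA
  have hA0 : 0 ≤ A := by positivity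
  set M : ℝ := ‖q₀‖ + A with hM
  have hMb : ∀ k, ‖z k‖ ≤ M := by
    intro k
    calc ‖z k‖ = ‖(z k - q₀) + q₀‖ := by rw [sub_add_cancel]
      _ ≤ ‖z k - q₀‖ + ‖q₀‖ := norm_add_le _ _
      _ ≤ M := by rw [hM, hA]; linarith [hbound₀ k]
  -- displacement b k
  set b : ℕ → ℝ := fun k => ‖R (z k) - z k‖ with hb
  have hbstep : ∀ k, b (k + 1) ≤ b k + 2 * e k := by
    intro k
    have h1 : ‖z (k + 1) - z k‖ ≤ lam k * b k + e k := by
      have hid : z (k + 1) - z k = lam k • (R (z k) - z k) + ρ k • d k := by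
        rw [hzw k, hw]; module
      rw [hid]
      calc ‖lam k • (R (z k) - z k) + ρ k • d k‖
          ≤ ‖lam k • (R (z k) - z k)‖ + ‖ρ k • d k‖ := norm_add_le _ _
        _ = lam k * b k + e k := by
            rw [hnd k, norm_smul, Real.norm_eq_abs, abs_of_pos (hlam0 k), hb]
    have h2 : ‖R (z k) - z (k + 1)‖ ≤ (1 - lam k) * b k + e k := by
      have hid : R (z k) - z (k + 1) = (1 - lam k) • (R (z k) - z k) - ρ k • d k := by
        rw [hzw k, hw]; module
      rw [hid]
      calc ‖(1 - lam k) • (R (z k) - z k) - ρ k • d k‖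
          ≤ ‖(1 - lam k) • (R (z k) - z k)‖ + ‖ρ k • d k‖ := norm_sub_le _ _
        _ = (1 - lam k) * b k + e k := by
            rw [hnd k, norm_smul, Real.norm_eq_abs,
              abs_of_nonneg (by linarith [hlam1 k]), hb]
    have h3 : b (k + 1) ≤ ‖R (z (k + 1)) - R (z k)‖ + ‖R (z k) - z (k + 1)‖ := by
      rw [hb]
      exact norm_sub_le_norm_sub_add_norm_sub _ _ _
    have h4 : ‖R (z (k + 1)) - R (z k)‖ ≤ ‖z (k + 1) - z k‖ := hR _ _
    nlinarith
  obtain ⟨lb, hlb0, hlbt, -⟩ := km_aux_tendsto b (fun k => 2 * e k)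
    (fun k => by linarith [he0 k]) (herr.mul_left 2) (fun k => norm_nonneg _) (fun k => by linarith [hbstep k])
  -- summability of lam (1-lam) b²
  set s : ℕ → ℝ := fun k => lam k * (1 - lam k) * b k ^ 2 with hs
  have hs0 : ∀ k, 0 ≤ s k := by
    intro k
    have h1 := hlam0 k; have h2 := hlam1 k
    simp only [hs]
    exact mul_nonneg (mul_nonneg h1.le (by linarith)) (sq_nonneg _)
  -- key convexity inequality
  have hkey : ∀ k, s k ≤ ‖z k - q₀‖ ^ 2 - ‖w k - q₀‖ ^ 2 := by
    intro k
    have hid : w k - q₀ = (1 - lam k) • (z k - q₀) + lam k • (R (z k) - q₀) := by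
      rw [hw]; module
    have hcv := km_aux_convex (z k - q₀) (R (z k) - q₀) (lam k)
    have hbk : ‖(z k - q₀) - (R (z k) - q₀)‖ = b k := by
      have huv : (z k - q₀) - (R (z k) - q₀) = z k - R (z k) := by module
      rw [huv, hb]; dsimp only; rw [norm_sub_rev]
    have hvled : ‖R (z k) - q₀‖ ≤ ‖z k - q₀‖ := by
      conv_lhs => rw [← hq₀]
      exact hR _ _
    have h2 : ‖w k - q₀‖ ^ 2 = (1 - lam k) * ‖z k - q₀‖ ^ 2 + lam k * ‖R (z k) - q₀‖ ^ 2
        - lam k * (1 - lam k) * b k ^ 2 := by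
      rw [hid, hcv, hbk]
    have h3 : lam k * ‖R (z k) - q₀‖ ^ 2 ≤ lam k * ‖z k - q₀‖ ^ 2 :=
      mul_le_mul_of_nonneg_left (pow_le_pow_left₀ (norm_nonneg _) hvled 2) (hlam0 k).le
    simp only [hs]
    linarith
  set K : ℝ := 2 * A + E with hK
  have hK0 : 0 ≤ K := by rw [hK]; linarith
  have hsq2 : ∀ k, ‖z (k + 1) - q₀‖ ^ 2 ≤ ‖w k - q₀‖ ^ 2 + K * e k := by
    intro k
    have h1 : ‖z (k + 1) - q₀‖ ≤ ‖w k - q₀‖ + e k := by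
      calc ‖z (k + 1) - q₀‖ = ‖(w k - q₀) + ρ k • d k‖ := by rw [hzw k]; congr 1; module
        _ ≤ ‖w k - q₀‖ + ‖ρ k • d k‖ := norm_add_le _ _
        _ = ‖w k - q₀‖ + e k := by rw [hnd k]
    have h2 : ‖w k - q₀‖ ≤ A := by
      refine le_trans (hwq q₀ hq₀ k) ?_
      have := hbound₀ k; rw [hA]; linarith
    have h3 : e k ≤ E := by
      rw [hE]; exact Summable.le_tsum herr k (fun j _ => he0 j)
    have h4 := he0 k
    have h5 := norm_nonneg (z (k + 1) - q₀)
    have h6 := norm_nonneg (w k - q₀)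
    rw [hK]
    nlinarith
  have hssum : Summable s := by
    apply summable_of_sum_range_le (c := ‖z 0 - q₀‖ ^ 2 + K * E) hs0
    intro n
    have h1 : ∀ k, s k ≤ ‖z k - q₀‖ ^ 2 - ‖z (k + 1) - q₀‖ ^ 2 + K * e k := by
      intro k; linarith [hkey k, hsq2 k]
    calc ∑ k ∈ Finset.range n, s k
        ≤ ∑ k ∈ Finset.range n, (‖z k - q₀‖ ^ 2 - ‖z (k + 1) - q₀‖ ^ 2 + K * e k) :=
          Finset.sum_le_sum (fun k _ => h1 k)
      _ = (‖z 0 - q₀‖ ^ 2 - ‖z n - q₀‖ ^ 2) + K * ∑ k ∈ Finset.range n, e k := by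
          rw [Finset.sum_add_distrib, Finset.sum_range_sub' (fun k => ‖z k - q₀‖ ^ 2),
            ← Finset.mul_sum]
      _ ≤ ‖z 0 - q₀‖ ^ 2 + K * E := by
          have h4 : ∑ k ∈ Finset.range n, e k ≤ E := by
            rw [hE]; exact Summable.sum_le_tsum _ (fun j _ => he0 j) herr
          nlinarith [sq_nonneg ‖z n - q₀‖, mul_le_mul_of_nonneg_left h4 hK0]
  -- the displacement tends to 0
  have hlbz : lb = 0 := by
    by_contra hne
    have hlbpos : 0 < lb := lt_of_le_of_ne hlb0 (Ne.symm hne)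
    have hev : ∀ᶠ k in atTop, lb / 2 < b k :=
      hlbt.eventually (eventually_gt_nhds (by linarith))
    obtain ⟨N, hN⟩ := eventually_atTop.1 hev
    apply hdiv
    have hs' : Summable (fun k => ρ k * (1 / α - ρ k) * b k ^ 2) := by
      refine Summable.congr (hssum.mul_left (1 / α ^ 2)) fun k => ?_
      simp only [hs, hlam]
      field_simp
    apply (summable_nat_add_iff N).1
    refine Summable.of_nonneg_of_le (fun k => ?_) (fun k => ?_)
      (((summable_nat_add_iff N).2 hs').mul_left (4 / lb ^ 2))
    · exact mul_nonneg (hρ _).1.le (by linarith [(hρ (k + N)).2])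
    · have hP0 : 0 ≤ ρ (k + N) * (1 / α - ρ (k + N)) :=
        mul_nonneg (hρ _).1.le (by linarith [(hρ (k + N)).2])
      have hb2 : lb / 2 < b (k + N) := hN (k + N) (by omega)
      have hbnn : 0 ≤ b (k + N) := norm_nonneg _
      have hlb2 : (0:ℝ) < lb ^ 2 := by positivity
      set P : ℝ := ρ (k + N) * (1 / α - ρ (k + N)) with hPdef
      have hbb : lb ^ 2 ≤ 4 * b (k + N) ^ 2 := by nlinarith [hb2, hlbpos, hbnn]
      have key : P * lb ^ 2 ≤ 4 * (P * b (k + N) ^ 2) := by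
        nlinarith [mul_le_mul_of_nonneg_left hbb hP0]
      calc P = P * lb ^ 2 / lb ^ 2 := by field_simp
        _ ≤ 4 * (P * b (k + N) ^ 2) / lb ^ 2 := (div_le_div_iff_of_pos_right hlb2).2 key
        _ = 4 / lb ^ 2 * (P * b (k + N) ^ 2) := by ring
  have hb0 : Tendsto (fun k => ‖R (z k) - z k‖) atTop (nhds 0) := by
    have h := hlbt; rw [hlbz] at h; exact h
  -- weak limits along ultrafilters
  obtain ⟨U, hU⟩ := Filter.exists_ultrafilter_le (atTop : Filter ℕ)
  obtain ⟨x, hxR, hxw⟩ := km_aux_weaklimit R hR z M hMb hb0 U hU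
  refine ⟨x, (hfixTR x).2 hxR, ?_⟩
  intro y
  rw [Filter.tendsto_iff_ultrafilter]
  intro V hV
  obtain ⟨x', hx'R, hx'w⟩ := km_aux_weaklimit R hR z M hMb hb0 V hV
  obtain ⟨L1, hL10, hL1, -⟩ := hfej x hxR
  obtain ⟨L2, hL20, hL2, -⟩ := hfej x' hx'R
  have hteq : ∀ k, ⟪z k, x - x'⟫ =
      (‖z k - x'‖ ^ 2 - ‖z k - x‖ ^ 2 - ‖x'‖ ^ 2 + ‖x‖ ^ 2) / 2 := by
    intro k
    have e1 := norm_sub_sq_real (z k) x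
    have e2 := norm_sub_sq_real (z k) x'
    have e3 : ⟪z k, x - x'⟫ = ⟪z k, x⟫ - ⟪z k, x'⟫ := inner_sub_right _ _ _
    linarith
  have htc : Tendsto (fun k => ⟪z k, x - x'⟫) atTop
      (nhds ((L2 ^ 2 - L1 ^ 2 - ‖x'‖ ^ 2 + ‖x‖ ^ 2) / 2)) := by
    simp only [hteq]
    exact ((((hL2.pow 2).sub (hL1.pow 2)).sub tendsto_const_nhds).add
      tendsto_const_nhds).div_const 2
  have hcx : ⟪x, x - x'⟫ = (L2 ^ 2 - L1 ^ 2 - ‖x'‖ ^ 2 + ‖x‖ ^ 2) / 2 :=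
    tendsto_nhds_unique (hxw (x - x')) (htc.mono_left hU)
  have hcx' : ⟪x', x - x'⟫ = (L2 ^ 2 - L1 ^ 2 - ‖x'‖ ^ 2 + ‖x‖ ^ 2) / 2 :=
    tendsto_nhds_unique (hx'w (x - x')) (htc.mono_left hV)
  have hz0 : ⟪x - x', x - x'⟫ = 0 := by
    rw [inner_sub_left, hcx, hcx']; ring
  have hxx : x = x' := by
    have h := inner_self_eq_zero.1 hz0
    rwa [sub_eq_zero] at h
  rw [hxx]
  exact hx'w y
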